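/- Let (H, A, C)_R be a left-left Doi-Koppinen datum over an algebra R (H an R-bialgebroid, A a left H-comodule algebra, C a left H-module coalgebra). Then 𝒞 = C ⊗_R A is an A-coring: it is an A-bimodule with right action by multiplication in A and left action a·(c ⊗_R a') = a_{<-1>}·c ⊗_R a_{<0>} a', with coproduct Δ_𝒞 = Δ_C ⊗_R A (via C ⊗_R A ⊗_A C ⊗_R A ≅ C ⊗_R C ⊗_R A) and counit ε_𝒞 = ε_C ⊗_R A (via R ⊗_R A ≅ A). -/
import Mathlib

open TensorProduct LinearMap MulOpposite

noncomputable section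
namespace BGD

variable (k : Type*) [CommRing k] (R H : Type*) [Ring R] [Ring H]
  [Algebra k R] [Algebra k H]
  (sH : R →ₐ[k] H) (tH : Rᵐᵒᵖ →ₐ[k] H)
  (ΔH : H →ₗ[k] H ⊗[k] H) (εH : H →ₗ[k] R)

/-- Balancing relations for `H ⊗_R H` (bimodule structure `r · h · r' = s_H(r) t_H(r') h`). -/
def rel : Submodule k (H ⊗[k] H) :=
  Submodule.span k {x | ∃ (r : R) (a b : H),
    x = (tH (op r) * a) ⊗ₜ[k] b - a ⊗ₜ[k] (sH r * b)}

/-- Balancing relations for `H ⊗_R H ⊗_R H`, written in `H ⊗ (H ⊗ H)`. -/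
def rel3 : Submodule k (H ⊗[k] (H ⊗[k] H)) :=
  Submodule.span k
    ({x | ∃ (r : R) (a : H) (y : H ⊗[k] H),
        x = (tH (op r) * a) ⊗ₜ[k] y -
          a ⊗ₜ[k] ((LinearMap.rTensor H (LinearMap.mulLeft k (sH r))) y)} ∪
     {x | ∃ (r : R) (a b c : H),
        x = a ⊗ₜ[k] ((tH (op r) * b) ⊗ₜ[k] c) - a ⊗ₜ[k] (b ⊗ₜ[k] (sH r * c))})

/-- `(a ⊗ b) ↦ s_H(ε_H a) * b`. -/
def cl : H ⊗[k] H →ₗ[k] H :=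
  LinearMap.mul' k H ∘ₗ TensorProduct.map (sH.toLinearMap ∘ₗ εH) LinearMap.id

/-- `(a ⊗ b) ↦ t_H(ε_H b) * a`. -/
def cr : H ⊗[k] H →ₗ[k] H :=
  LinearMap.mul' k H ∘ₗ
    TensorProduct.map (tH.toLinearMap ∘ₗ (opLinearEquiv k).toLinearMap ∘ₗ εH) LinearMap.id ∘ₗ
    (TensorProduct.comm k H H).toLinearMap

/-- The `R`-bialgebroid axioms for `(H, s_H, t_H, Δ_H, ε_H)`, with the coproduct given by a
`k`-linear lift `Δ_H : H → H ⊗_k H` of the coproduct `H → H ⊗_R H` (all conditions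
involving `H ⊗_R H` are stated modulo the balancing relations). -/
def IsBialgebroid : Prop :=
  (∀ r r' : R, sH r * tH (op r') = tH (op r') * sH r) ∧
  -- `(H, Δ, ε)` is an `R`-coring:
  (∀ h : H, cl k R H sH εH (ΔH h) = h) ∧
  (∀ h : H, cr k R H tH εH (ΔH h) = h) ∧
  (∀ h : H, (rel3 k R H sH tH).mkQ
      ((TensorProduct.assoc k H H H) ((LinearMap.rTensor H ΔH) (ΔH h))) =
    (rel3 k R H sH tH).mkQ ((LinearMap.lTensor H ΔH) (ΔH h))) ∧
  (∀ (r : R) (h : H), εH (sH r * h) = r * εH h) ∧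
  (∀ (r : R) (h : H), εH (tH (op r) * h) = εH h * r) ∧
  (∀ (r : R) (h : H), (rel k R H sH tH).mkQ (ΔH (sH r * h)) =
    (rel k R H sH tH).mkQ ((LinearMap.rTensor H (LinearMap.mulLeft k (sH r))) (ΔH h))) ∧
  (∀ (r : R) (h : H), (rel k R H sH tH).mkQ (ΔH (tH (op r) * h)) =
    (rel k R H sH tH).mkQ
      ((LinearMap.lTensor H (LinearMap.mulLeft k (tH (op r)))) (ΔH h))) ∧
  -- the image of `Δ` lies in the Takeuchi product `H ×_R H`:
  (∀ (r : R) (h : H),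
    (rel k R H sH tH).mkQ ((LinearMap.rTensor H (LinearMap.mulRight k (tH (op r)))) (ΔH h)) =
      (rel k R H sH tH).mkQ ((LinearMap.lTensor H (LinearMap.mulRight k (sH r))) (ΔH h))) ∧
  -- the corestriction of `Δ` is an algebra map:
  (∀ g h : H, (rel k R H sH tH).mkQ (ΔH (g * h)) = (rel k R H sH tH).mkQ (ΔH g * ΔH h)) ∧
  ((rel k R H sH tH).mkQ (ΔH 1) = (rel k R H sH tH).mkQ ((1 : H) ⊗ₜ[k] (1 : H))) ∧
  -- counit conditions:
  (εH 1 = 1) ∧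
  (∀ g h : H, εH (g * h) = εH (g * sH (εH h))) ∧
  (∀ g h : H, εH (g * h) = εH (g * tH (op (εH h))))

section ModuleCoalgebra

variable (C : Type*) [AddCommGroup C] [Module k C]
  (act : H →ₗ[k] C →ₗ[k] C) (ΔC : C →ₗ[k] C ⊗[k] C) (εC : C →ₗ[k] R)

/-- Evaluation `H ⊗ C → C` of the action. -/
def evC : H ⊗[k] C →ₗ[k] C := TensorProduct.lift act

/-- Balancing relations for `C ⊗_R C`, where `C` is an `R`-bimodule via
`r · c · r' = (s_H r · t_H r') · c`. -/
def relC : Submodule k (C ⊗[k] C) :=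
  Submodule.span k {x | ∃ (r : R) (c c' : C),
    x = (act (tH (op r)) c) ⊗ₜ[k] c' - c ⊗ₜ[k] (act (sH r) c')}

/-- Balancing relations for `C ⊗_R C ⊗_R C` inside `C ⊗ (C ⊗ C)`. -/
def relC3 : Submodule k (C ⊗[k] (C ⊗[k] C)) :=
  Submodule.span k
    ({x | ∃ (r : R) (c : C) (y : C ⊗[k] C),
        x = (act (tH (op r)) c) ⊗ₜ[k] y -
          c ⊗ₜ[k] ((LinearMap.rTensor C (act (sH r))) y)} ∪
     {x | ∃ (r : R) (c c' c'' : C),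
        x = c ⊗ₜ[k] ((act (tH (op r)) c') ⊗ₜ[k] c'') -
          c ⊗ₜ[k] (c' ⊗ₜ[k] (act (sH r) c''))})

/-- The diagonal action of `H ⊗ H` on `C ⊗ C`: `(g ⊗ g') ⊗ (c ⊗ c') ↦ g·c ⊗ g'·c'`. -/
def Psi2 : (H ⊗[k] H) ⊗[k] (C ⊗[k] C) →ₗ[k] C ⊗[k] C :=
  TensorProduct.map (evC k H C act) (evC k H C act) ∘ₗ
    (TensorProduct.tensorTensorTensorComm k H H C C).toLinearMap

/-- `(c ⊗ c') ↦ s_H(ε_C c) · c'`. -/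
def clC : C ⊗[k] C →ₗ[k] C :=
  evC k H C act ∘ₗ TensorProduct.map (sH.toLinearMap ∘ₗ εC) LinearMap.id

/-- `(c ⊗ c') ↦ t_H(ε_C c') · c`. -/
def crC : C ⊗[k] C →ₗ[k] C :=
  evC k H C act ∘ₗ
    TensorProduct.map (tH.toLinearMap ∘ₗ (opLinearEquiv k).toLinearMap ∘ₗ εC) LinearMap.id ∘ₗ
    (TensorProduct.comm k C C).toLinearMap

/-- `C` is a left `H`-module coalgebra for the `R`-bialgebroid `H`: a coalgebra in the
monoidal category of left `H`-modules, i.e. an `R`-coring `(C, Δ_C, ε_C)` with a left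
`H`-module structure such that `Δ_C` and `ε_C` are `H`-linear. -/
def IsModuleCoalgebra : Prop :=
  (∀ (g h : H) (c : C), act (g * h) c = act g (act h c)) ∧
  (∀ c : C, act 1 c = c) ∧
  -- `R`-coring axioms:
  (∀ c : C, (relC3 k R H sH tH C act).mkQ
      ((TensorProduct.assoc k C C C) ((LinearMap.rTensor C ΔC) (ΔC c))) =
    (relC3 k R H sH tH C act).mkQ ((LinearMap.lTensor C ΔC) (ΔC c))) ∧
  (∀ c : C, clC k R H sH C act εC (ΔC c) = c) ∧
  (∀ c : C, crC k R H tH C act εC (ΔC c) = c) ∧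
  -- `Δ_C` is `H`-linear: `Δ_C(h · c) = h₍₁₎·c₍₁₎ ⊗_R h₍₂₎·c₍₂₎`:
  (∀ (h : H) (c : C), (relC k R H sH tH C act).mkQ (ΔC (act h c)) =
    (relC k R H sH tH C act).mkQ ((Psi2 k H C act) ((ΔH h) ⊗ₜ[k] (ΔC c)))) ∧
  -- `ε_C` is `H`-linear: `ε_C(h · c) = ε_H(h s_H(ε_C c))`:
  (∀ (h : H) (c : C), εC (act h c) = εH (h * sH (εC c)))

end ModuleCoalgebra

section ComoduleAlgebra

variable (A : Type*) [Ring A] [Algebra k A] (sA : R →ₐ[k] A) (ρ : A →ₗ[k] H ⊗[k] A)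

/-- Balancing relations for `H ⊗_R A`. -/
def relA : Submodule k (H ⊗[k] A) :=
  Submodule.span k {x | ∃ (r : R) (h : H) (a : A),
    x = (tH (op r) * h) ⊗ₜ[k] a - h ⊗ₜ[k] (sA r * a)}

/-- Balancing relations for `H ⊗_R H ⊗_R A` inside `H ⊗ (H ⊗ A)`. -/
def relA3 : Submodule k (H ⊗[k] (H ⊗[k] A)) :=
  Submodule.span k
    ({x | ∃ (r : R) (h : H) (y : H ⊗[k] A),
        x = (tH (op r) * h) ⊗ₜ[k] y -
          h ⊗ₜ[k] ((LinearMap.rTensor A (LinearMap.mulLeft k (sH r))) y)} ∪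
     {x | ∃ (r : R) (h h' : H) (a : A),
        x = h ⊗ₜ[k] ((tH (op r) * h') ⊗ₜ[k] a) - h ⊗ₜ[k] (h' ⊗ₜ[k] (sA r * a))})

/-- `(h ⊗ a) ↦ s_A(ε_H h) * a`. -/
def clA : H ⊗[k] A →ₗ[k] A :=
  LinearMap.mul' k A ∘ₗ TensorProduct.map (sA.toLinearMap ∘ₗ εH) LinearMap.id

/-- `(A, s_A, ρ)` is a left `H`-comodule algebra for the `R`-bialgebroid `H`:
`(A, s_A)` is an `R`-ring, `(A, ρ)` is a left comodule of the `R`-coring `H` (with `ρ` a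
`k`-linear lift of the coaction `A → H ⊗_R A`), the image of `ρ` lies in the Takeuchi
product `H ×_R A`, and the corestriction of `ρ` is an algebra map. -/
def IsComoduleAlgebra : Prop :=
  (∀ a : A, (relA3 k R H sH tH A sA).mkQ
      ((TensorProduct.assoc k H H A) ((LinearMap.rTensor A ΔH) (ρ a))) =
    (relA3 k R H sH tH A sA).mkQ ((LinearMap.lTensor H ρ) (ρ a))) ∧
  (∀ a : A, clA k R H εH A sA (ρ a) = a) ∧
  (∀ (r : R) (a : A), (relA k R H tH A sA).mkQ (ρ (sA r * a)) =
    (relA k R H tH A sA).mkQ ((LinearMap.rTensor A (LinearMap.mulLeft k (sH r))) (ρ a))) ∧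
  (∀ (r : R) (a : A),
    (relA k R H tH A sA).mkQ ((LinearMap.rTensor A (LinearMap.mulRight k (tH (op r)))) (ρ a)) =
      (relA k R H tH A sA).mkQ ((LinearMap.lTensor H (LinearMap.mulRight k (sA r))) (ρ a))) ∧
  (∀ a b : A, (relA k R H tH A sA).mkQ (ρ (a * b)) =
    (relA k R H tH A sA).mkQ (ρ a * ρ b)) ∧
  ((relA k R H tH A sA).mkQ (ρ 1) = (relA k R H tH A sA).mkQ ((1 : H) ⊗ₜ[k] (1 : A)))

end ComoduleAlgebra

end BGD
end

open TensorProduct LinearMap MulOpposite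

noncomputable section
set_option synthInstance.maxHeartbeats 400000
set_option maxHeartbeats 1000000
namespace DKP
open BGD

theorem span_map {k M N : Type*} [CommRing k] [AddCommGroup M] [Module k M]
    [AddCommGroup N] [Module k N]
    (f : M →ₗ[k] N) (S : Set M) (T : Submodule k N) (h : ∀ s ∈ S, f s ∈ T)
    {y : M} (hy : y ∈ Submodule.span k S) : f y ∈ T :=
  Submodule.span_le (p := T.comap f).mpr (fun s hs => h s hs) hy

theorem mkq_eq {k M : Type*} [CommRing k] [AddCommGroup M] [Module k M]
    (p : Submodule k M) {x y : M} (h : x - y ∈ p) : p.mkQ x = p.mkQ y := by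
  simpa only [Submodule.mkQ_apply] using (Submodule.Quotient.eq p).mpr h

theorem mkq_eq' {k M : Type*} [CommRing k] [AddCommGroup M] [Module k M]
    {p : Submodule k M} {x y : M} (h : p.mkQ x = p.mkQ y) : x - y ∈ p := by
  rw [Submodule.mkQ_apply, Submodule.mkQ_apply] at h
  exact (Submodule.Quotient.eq p).mp h

variable (k : Type*) [CommRing k] (R H : Type*) [Ring R] [Ring H]
    [Algebra k R] [Algebra k H]
    (sH : R →ₐ[k] H) (tH : Rᵐᵒᵖ →ₐ[k] H)
    (ΔH : H →ₗ[k] H ⊗[k] H) (εH : H →ₗ[k] R)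
    (C : Type*) [AddCommGroup C] [Module k C]
    (act : H →ₗ[k] C →ₗ[k] C) (ΔC : C →ₗ[k] C ⊗[k] C) (εC : C →ₗ[k] R)
    (A : Type*) [Ring A] [Algebra k A] (sA : R →ₐ[k] A) (ρ : A →ₗ[k] H ⊗[k] A)

def relCA : Submodule k (C ⊗[k] A) := Submodule.span k
  {x | ∃ (r : R) (c : C) (a : A),
    x = (act (tH (op r)) c) ⊗ₜ[k] a - c ⊗ₜ[k] (sA r * a)}

def inn : (H ⊗[k] A) ⊗[k] (C ⊗[k] A) →ₗ[k] C ⊗[k] A :=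
  TensorProduct.map (TensorProduct.lift act) (LinearMap.mul' k A) ∘ₗ
    (TensorProduct.tensorTensorTensorComm k H A C A).toLinearMap

@[simp] lemma inn_tmul (h : H) (a : A) (c : C) (a' : A) :
    inn k H C act A ((h ⊗ₜ[k] a) ⊗ₜ[k] (c ⊗ₜ[k] a')) = (act h c) ⊗ₜ[k] (a * a') := by
  simp [inn]

theorem inn_relA (hmul : ∀ (g h : H) (c : C), act (g * h) c = act g (act h c))
    (x : C ⊗[k] A) {y : H ⊗[k] A} (hy : y ∈ BGD.relA k R H tH A sA) :
    inn k H C act A (y ⊗ₜ[k] x) ∈ relCA k R H tH C act A sA := by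
  refine span_map ((inn k H C act A) ∘ₗ (TensorProduct.mk k _ _).flip x) _ _ ?_ hy
  rintro s ⟨r, h, a, rfl⟩
  simp only [coe_comp, Function.comp_apply, flip_apply, mk_apply, sub_tmul, map_sub]
  induction x using TensorProduct.induction_on with
  | zero => simp
  | tmul c a' =>
      simp only [inn_tmul, hmul, mul_assoc]
      exact Submodule.subset_span ⟨r, act h c, a * a', rfl⟩
  | add u v hu hv =>
      simpa only [tmul_add, map_add, ← sub_add_sub_comm] using Submodule.add_mem _ hu hv

theorem inn_one (hone : ∀ c : C, act 1 c = c) (x : C ⊗[k] A) :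
    inn k H C act A (((1 : H) ⊗ₜ[k] (1 : A)) ⊗ₜ[k] x) = x := by
  induction x using TensorProduct.induction_on with
  | zero => simp
  | tmul c a' => simp [hone]
  | add u v hu hv => rw [tmul_add, map_add, hu, hv]

theorem inn_mul (hmul : ∀ (g h : H) (c : C), act (g * h) c = act g (act h c))
    (y z : H ⊗[k] A) (x : C ⊗[k] A) :
    inn k H C act A ((y * z) ⊗ₜ[k] x) =
      inn k H C act A (y ⊗ₜ[k] inn k H C act A (z ⊗ₜ[k] x)) := by
  induction y using TensorProduct.induction_on with
  | zero => simp
  | add u v hu hv => simp only [add_mul, add_tmul, map_add, hu, hv]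
  | tmul h a =>
    induction z using TensorProduct.induction_on with
    | zero => simp
    | add u v hu hv => simp only [mul_add, add_tmul, tmul_add, map_add, hu, hv]
    | tmul h' a' =>
      induction x using TensorProduct.induction_on with
      | zero => simp
      | add u v hu hv => simp only [tmul_add, map_add, hu, hv]
      | tmul c a'' => simp [Algebra.TensorProduct.tmul_mul_tmul, hmul, mul_assoc]

theorem inn_rtensor (hmul : ∀ (g h : H) (c : C), act (g * h) c = act g (act h c))
    (y : H ⊗[k] A) (r : R) (c : C) (a' : A) :
    inn k H C act A (y ⊗ₜ[k] ((act (tH (op r)) c) ⊗ₜ[k] a')) =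
      inn k H C act A
        ((LinearMap.rTensor A (LinearMap.mulRight k (tH (op r)))) y ⊗ₜ[k] (c ⊗ₜ[k] a')) := by
  induction y using TensorProduct.induction_on with
  | zero => simp
  | add u v hu hv => simp only [add_tmul, map_add, hu, hv]
  | tmul h a => simp [hmul]

theorem inn_ltensor (y : H ⊗[k] A) (r : R) (c : C) (a' : A) :
    inn k H C act A (y ⊗ₜ[k] (c ⊗ₜ[k] (sA r * a'))) =
      inn k H C act A
        ((LinearMap.lTensor H (LinearMap.mulRight k (sA r))) y ⊗ₜ[k] (c ⊗ₜ[k] a')) := by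
  induction y using TensorProduct.induction_on with
  | zero => simp
  | add u v hu hv => simp only [add_tmul, map_add, hu, hv]
  | tmul h a => simp [mul_assoc]

theorem eps_sH (b5 : ∀ (r : R) (h : H), εH (sH r * h) = r * εH h) (b12 : εH 1 = 1)
    (r : R) : εH (sH r) = r := by
  have := b5 r 1; rw [mul_one] at this; rw [this, b12, mul_one]

theorem rel_lTensor (b1 : ∀ r r' : R, sH r * tH (op r') = tH (op r') * sH r) (r : R)
    {y : H ⊗[k] H} (hy : y ∈ BGD.rel k R H sH tH) :
    LinearMap.lTensor H (LinearMap.mulLeft k (tH (op r))) y ∈ BGD.rel k R H sH tH := by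
  refine span_map _ _ _ ?_ hy
  rintro s ⟨r', a, b, rfl⟩
  simp only [map_sub, lTensor_tmul, mulLeft_apply]
  have h : tH (op r) * (sH r' * b) = sH r' * (tH (op r) * b) := by
    rw [← mul_assoc, ← b1, mul_assoc]
  rw [h]
  exact Submodule.subset_span ⟨r', a, tH (op r) * b, rfl⟩

theorem DeltaH_tH (b1 : ∀ r r' : R, sH r * tH (op r') = tH (op r') * sH r)
    (b8 : ∀ (r : R) (h : H), (BGD.rel k R H sH tH).mkQ (ΔH (tH (op r) * h)) =
      (BGD.rel k R H sH tH).mkQ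
        ((LinearMap.lTensor H (LinearMap.mulLeft k (tH (op r)))) (ΔH h)))
    (b11 : (BGD.rel k R H sH tH).mkQ (ΔH 1) =
      (BGD.rel k R H sH tH).mkQ ((1 : H) ⊗ₜ[k] (1 : H)))
    (r : R) : ΔH (tH (op r)) - (1 : H) ⊗ₜ[k] tH (op r) ∈ BGD.rel k R H sH tH := by
  have h1 : ΔH (tH (op r)) -
      LinearMap.lTensor H (LinearMap.mulLeft k (tH (op r))) (ΔH 1) ∈ BGD.rel k R H sH tH := by
    have := b8 r 1; rw [mul_one] at this; exact mkq_eq' this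
  have h2 : LinearMap.lTensor H (LinearMap.mulLeft k (tH (op r))) (ΔH 1) -
      LinearMap.lTensor H (LinearMap.mulLeft k (tH (op r))) ((1 : H) ⊗ₜ[k] (1 : H)) ∈
        BGD.rel k R H sH tH := by
    simpa only [map_sub] using rel_lTensor k R H sH tH b1 r (mkq_eq' b11)
  have h3 := Submodule.add_mem _ h1 h2
  rw [sub_add_sub_cancel] at h3
  simpa only [lTensor_tmul, mulLeft_apply, mul_one] using h3

@[simp] lemma Psi2_tmul (g g' : H) (c c' : C) :
    BGD.Psi2 k H C act ((g ⊗ₜ[k] g') ⊗ₜ[k] (c ⊗ₜ[k] c')) = (act g c) ⊗ₜ[k] (act g' c') := by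
  simp [BGD.Psi2, BGD.evC]

theorem Psi2_rel (hmul : ∀ (g h : H) (c : C), act (g * h) c = act g (act h c))
    (z : C ⊗[k] C) {y : H ⊗[k] H} (hy : y ∈ BGD.rel k R H sH tH) :
    BGD.Psi2 k H C act (y ⊗ₜ[k] z) ∈ BGD.relC k R H sH tH C act := by
  refine span_map ((BGD.Psi2 k H C act) ∘ₗ (TensorProduct.mk k _ _).flip z) _ _ ?_ hy
  rintro s ⟨r, g, g', rfl⟩
  simp only [coe_comp, Function.comp_apply, flip_apply, mk_apply, sub_tmul, map_sub]
  induction z using TensorProduct.induction_on with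
  | zero => simp
  | tmul c c' =>
      simp only [Psi2_tmul, hmul]
      exact Submodule.subset_span ⟨r, act g c, act g' c', rfl⟩
  | add u v hu hv =>
      simpa only [tmul_add, map_add, ← sub_add_sub_comm] using Submodule.add_mem _ hu hv

theorem Psi2_one_tH (hone : ∀ c : C, act 1 c = c) (r : R) (z : C ⊗[k] C) :
    BGD.Psi2 k H C act (((1 : H) ⊗ₜ[k] tH (op r)) ⊗ₜ[k] z) =
      LinearMap.lTensor C (act (tH (op r))) z := by
  induction z using TensorProduct.induction_on with
  | zero => simp
  | tmul c c' => simp [hone]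
  | add u v hu hv => simp only [tmul_add, map_add, hu, hv]

theorem DeltaC_tH (hmul : ∀ (g h : H) (c : C), act (g * h) c = act g (act h c))
    (hone : ∀ c : C, act 1 c = c)
    (b1 : ∀ r r' : R, sH r * tH (op r') = tH (op r') * sH r)
    (b8 : ∀ (r : R) (h : H), (BGD.rel k R H sH tH).mkQ (ΔH (tH (op r) * h)) =
      (BGD.rel k R H sH tH).mkQ
        ((LinearMap.lTensor H (LinearMap.mulLeft k (tH (op r)))) (ΔH h)))
    (b11 : (BGD.rel k R H sH tH).mkQ (ΔH 1) =
      (BGD.rel k R H sH tH).mkQ ((1 : H) ⊗ₜ[k] (1 : H)))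
    (c6 : ∀ (h : H) (c : C), (BGD.relC k R H sH tH C act).mkQ (ΔC (act h c)) =
      (BGD.relC k R H sH tH C act).mkQ ((BGD.Psi2 k H C act) ((ΔH h) ⊗ₜ[k] (ΔC c))))
    (r : R) (c : C) :
    ΔC (act (tH (op r)) c) - LinearMap.lTensor C (act (tH (op r))) (ΔC c) ∈
      BGD.relC k R H sH tH C act := by
  have e1 : ΔC (act (tH (op r)) c) - BGD.Psi2 k H C act (ΔH (tH (op r)) ⊗ₜ[k] ΔC c) ∈
      BGD.relC k R H sH tH C act := mkq_eq' (c6 _ c)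
  have e2 : BGD.Psi2 k H C act
      ((ΔH (tH (op r)) - (1 : H) ⊗ₜ[k] tH (op r)) ⊗ₜ[k] ΔC c) ∈
        BGD.relC k R H sH tH C act :=
    Psi2_rel k R H sH tH C act hmul (ΔC c) (DeltaH_tH k R H sH tH ΔH b1 b8 b11 r)
  have e2' : BGD.Psi2 k H C act (ΔH (tH (op r)) ⊗ₜ[k] ΔC c) -
      LinearMap.lTensor C (act (tH (op r))) (ΔC c) ∈ BGD.relC k R H sH tH C act := by
    simpa only [sub_tmul, map_sub, Psi2_one_tH k R H tH C act hone] using e2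
  simpa only [sub_add_sub_cancel] using Submodule.add_mem _ e1 e2'

/-- the relations for `C ⊗_R C ⊗_R A`. -/
def rel3CA : Submodule k (C ⊗[k] (C ⊗[k] A)) := Submodule.span k
  ({x | ∃ (r : R) (c : C) (y : C ⊗[k] A),
      x = (act (tH (op r)) c) ⊗ₜ[k] y -
        c ⊗ₜ[k] ((LinearMap.rTensor A (act (sH r))) y)} ∪
   {x | ∃ (r : R) (c c' : C) (a : A),
      x = c ⊗ₜ[k] ((act (tH (op r)) c') ⊗ₜ[k] a) - c ⊗ₜ[k] (c' ⊗ₜ[k] (sA r * a))})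

/-- `c ↦ c ⊗ₜ a'`. -/
def g0 (a' : A) : C →ₗ[k] C ⊗[k] A := (TensorProduct.mk k C A).flip a'

@[simp] lemma g0_apply (a' : A) (c : C) : g0 k C A a' c = c ⊗ₜ[k] a' := rfl

lemma assoc_g0 (u : C ⊗[k] C) (a' : A) :
    (TensorProduct.assoc k C C A) (u ⊗ₜ[k] a') =
      LinearMap.lTensor C (g0 k C A a') u := by
  induction u using TensorProduct.induction_on with
  | zero => simp
  | tmul c c' => simp
  | add u v hu hv => simp only [add_tmul, map_add, hu, hv]

theorem graft1 (a'' : A) {y : C ⊗[k] C} (hy : y ∈ BGD.relC k R H sH tH C act) :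
    LinearMap.lTensor C (g0 k C A a'') y ∈ rel3CA k R H sH tH C act A sA := by
  refine span_map _ _ _ ?_ hy
  rintro s ⟨r, c₁, c₂, rfl⟩
  simp only [map_sub, lTensor_tmul, g0_apply]
  refine Submodule.subset_span (Set.mem_union_left _ ⟨r, c₁, c₂ ⊗ₜ[k] a'', ?_⟩)
  simp

theorem graft2 (r : R) (a' : A) (v : C ⊗[k] C) :
    LinearMap.lTensor C (g0 k C A a') (LinearMap.lTensor C (act (tH (op r))) v) -
      LinearMap.lTensor C (g0 k C A (sA r * a')) v ∈ rel3CA k R H sH tH C act A sA := by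
  induction v using TensorProduct.induction_on with
  | zero => simp
  | tmul c₁ c₂ =>
      simp only [lTensor_tmul, g0_apply]
      exact Submodule.subset_span (Set.mem_union_right _ ⟨r, c₁, c₂, a', rfl⟩)
  | add u v hu hv =>
      simpa only [map_add, ← sub_add_sub_comm] using Submodule.add_mem _ hu hv

/-- the coproduct `D = Δ_C ⊗ A`. -/
def DD : C ⊗[k] A →ₗ[k] C ⊗[k] (C ⊗[k] A) :=
  (TensorProduct.assoc k C C A).toLinearMap ∘ₗ LinearMap.rTensor A ΔC

lemma D_tmul (c : C) (a' : A) :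
    DD k C ΔC A (c ⊗ₜ[k] a') = LinearMap.lTensor C (g0 k C A a') (ΔC c) := by
  simp only [DD, coe_comp, Function.comp_apply, rTensor_tmul, LinearEquiv.coe_coe]
  exact assoc_g0 k C A (ΔC c) a'

/-- diagonal-type action used in `lam3`. -/
def F3 : (H ⊗[k] (H ⊗[k] A)) ⊗[k] (C ⊗[k] (C ⊗[k] A)) →ₗ[k] C ⊗[k] (C ⊗[k] A) :=
  TensorProduct.map (TensorProduct.lift act) (inn k H C act A) ∘ₗ
    (TensorProduct.tensorTensorTensorComm k H (H ⊗[k] A) C (C ⊗[k] A)).toLinearMap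

@[simp] lemma F3_tmul (g : H) (y : H ⊗[k] A) (c : C) (z : C ⊗[k] A) :
    F3 k H C act A ((g ⊗ₜ[k] y) ⊗ₜ[k] (c ⊗ₜ[k] z)) =
      (act g c) ⊗ₜ[k] inn k H C act A (y ⊗ₜ[k] z) := by
  simp [F3]

theorem M1 (u : H ⊗[k] H) (a₀ a' : A) (v : C ⊗[k] C) :
    (TensorProduct.assoc k C C A) ((BGD.Psi2 k H C act (u ⊗ₜ[k] v)) ⊗ₜ[k] (a₀ * a')) =
      F3 k H C act A ((TensorProduct.assoc k H H A (u ⊗ₜ[k] a₀)) ⊗ₜ[k]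
        ((TensorProduct.assoc k C C A) (v ⊗ₜ[k] a'))) := by
  induction u using TensorProduct.induction_on with
  | zero => simp
  | add u₁ u₂ h₁ h₂ => simp only [add_tmul, map_add, tmul_add, h₁, h₂]
  | tmul g g' =>
    induction v using TensorProduct.induction_on with
    | zero => simp
    | add v₁ v₂ h₁ h₂ => simp only [tmul_add, map_add, add_tmul, h₁, h₂]
    | tmul c c' => simp

theorem step1 (hmul : ∀ (g h : H) (c : C), act (g * h) c = act g (act h c))
    (c6 : ∀ (h : H) (c : C), (BGD.relC k R H sH tH C act).mkQ (ΔC (act h c)) =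
      (BGD.relC k R H sH tH C act).mkQ ((BGD.Psi2 k H C act) ((ΔH h) ⊗ₜ[k] (ΔC c))))
    (y : H ⊗[k] A) (c : C) (a' : A) :
    (rel3CA k R H sH tH C act A sA).mkQ (DD k C ΔC A (inn k H C act A (y ⊗ₜ[k] (c ⊗ₜ[k] a')))) =
      (rel3CA k R H sH tH C act A sA).mkQ (F3 k H C act A
        ((TensorProduct.assoc k H H A (LinearMap.rTensor A ΔH y)) ⊗ₜ[k]
          (DD k C ΔC A (c ⊗ₜ[k] a')))) := by
  induction y using TensorProduct.induction_on with
  | zero => simp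
  | add y₁ y₂ h₁ h₂ =>
      simp only [map_add, add_tmul, tmul_add] at *
      rw [h₁, h₂]
  | tmul h a₀ =>
    rw [inn_tmul, D_tmul]
    have e1 : (rel3CA k R H sH tH C act A sA).mkQ
        (LinearMap.lTensor C (g0 k C A (a₀ * a')) (ΔC (act h c))) =
      (rel3CA k R H sH tH C act A sA).mkQ
        (LinearMap.lTensor C (g0 k C A (a₀ * a'))
          (BGD.Psi2 k H C act ((ΔH h) ⊗ₜ[k] (ΔC c)))) := by
      refine mkq_eq _ ?_
      rw [← map_sub]
      exact graft1 k R H sH tH C act A sA (a₀ * a') (mkq_eq' (c6 h c))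
    rw [e1, ← assoc_g0 k C A (BGD.Psi2 k H C act ((ΔH h) ⊗ₜ[k] (ΔC c))) (a₀ * a'),
      M1 k H C act A (ΔH h) a₀ a' (ΔC c), rTensor_tmul, D_tmul k C ΔC A c a',
      assoc_g0 k C A (ΔC c) a']

theorem step2 (hmul : ∀ (g h : H) (c : C), act (g * h) c = act g (act h c))
    (c6 : ∀ (h : H) (c : C), (BGD.relC k R H sH tH C act).mkQ (ΔC (act h c)) =
      (BGD.relC k R H sH tH C act).mkQ ((BGD.Psi2 k H C act) ((ΔH h) ⊗ₜ[k] (ΔC c))))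
    (y : H ⊗[k] A) (x : C ⊗[k] A) :
    (rel3CA k R H sH tH C act A sA).mkQ (DD k C ΔC A (inn k H C act A (y ⊗ₜ[k] x))) =
      (rel3CA k R H sH tH C act A sA).mkQ (F3 k H C act A
        ((TensorProduct.assoc k H H A (LinearMap.rTensor A ΔH y)) ⊗ₜ[k]
          (DD k C ΔC A x))) := by
  induction x using TensorProduct.induction_on with
  | zero => simp
  | tmul c a' => exact step1 k R H sH tH ΔH C act ΔC A sA hmul c6 y c a'
  | add x₁ x₂ h₁ h₂ =>
      simp only [tmul_add, map_add] at *
      rw [h₁, h₂]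

/-- the relations for `C ⊗_R C ⊗_R C ⊗_R A`. -/
def rel4CA : Submodule k (C ⊗[k] (C ⊗[k] (C ⊗[k] A))) := Submodule.span k
  ({x | ∃ (r : R) (c : C) (y : C ⊗[k] (C ⊗[k] A)),
      x = (act (tH (op r)) c) ⊗ₜ[k] y -
        c ⊗ₜ[k] ((LinearMap.rTensor (C ⊗[k] A) (act (sH r))) y)} ∪
   {x | ∃ (r : R) (c c' : C) (y : C ⊗[k] A),
      x = c ⊗ₜ[k] ((act (tH (op r)) c') ⊗ₜ[k] y) -
        c ⊗ₜ[k] (c' ⊗ₜ[k] ((LinearMap.rTensor A (act (sH r))) y))} ∪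
   {x | ∃ (r : R) (c c' c'' : C) (a : A),
      x = c ⊗ₜ[k] (c' ⊗ₜ[k] ((act (tH (op r)) c'') ⊗ₜ[k] a)) -
        c ⊗ₜ[k] (c' ⊗ₜ[k] (c'' ⊗ₜ[k] (sA r * a)))})

lemma comm_rl (h0 : H) (a' : A) (y : C ⊗[k] C) :
    LinearMap.lTensor C (g0 k C A a') (LinearMap.rTensor C (act h0) y) =
      LinearMap.rTensor (C ⊗[k] A) (act h0) (LinearMap.lTensor C (g0 k C A a') y) := by
  induction y using TensorProduct.induction_on with
  | zero => simp
  | tmul c c' => simp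
  | add u v hu hv => simp only [map_add, hu, hv]

theorem N1 (a' : A) {w : C ⊗[k] (C ⊗[k] C)}
    (hw : w ∈ Submodule.span k
      ({x | ∃ (r : R) (c : C) (y : C ⊗[k] C),
          x = (act (tH (op r)) c) ⊗ₜ[k] y -
            c ⊗ₜ[k] ((LinearMap.rTensor C (act (sH r))) y)} ∪
       {x | ∃ (r : R) (c c' c'' : C),
          x = c ⊗ₜ[k] ((act (tH (op r)) c') ⊗ₜ[k] c'') -
            c ⊗ₜ[k] (c' ⊗ₜ[k] (act (sH r) c''))})) :
    LinearMap.lTensor C (LinearMap.lTensor C (g0 k C A a')) w ∈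
      rel4CA k R H sH tH C act A sA := by
  induction hw using Submodule.span_induction with
  | zero => simp
  | add x y hx hy ihx ihy => simpa only [map_add] using add_mem ihx ihy
  | smul a x hx ih => simpa only [map_smul] using Submodule.smul_mem _ a ih
  | mem s hs =>
  obtain (⟨r, c, y, rfl⟩ | ⟨r, c, c', c'', rfl⟩) := hs
  · simp only [map_sub, lTensor_tmul]
    rw [comm_rl]
    refine Submodule.subset_span (Set.mem_union_left _ (Set.mem_union_left _
      ⟨r, c, LinearMap.lTensor C (g0 k C A a') y, rfl⟩))
  · simp only [map_sub, lTensor_tmul, g0_apply]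
    refine Submodule.subset_span (Set.mem_union_left _ (Set.mem_union_right _
      ⟨r, c, c', c'' ⊗ₜ[k] a', ?_⟩))
    simp

lemma sub8 (u : C ⊗[k] C) (c₂ : C) (a' : A) :
    (TensorProduct.assoc k C C (C ⊗[k] A)) (u ⊗ₜ[k] (c₂ ⊗ₜ[k] a')) =
      LinearMap.lTensor C (LinearMap.lTensor C (g0 k C A a'))
        ((TensorProduct.assoc k C C C) (u ⊗ₜ[k] c₂)) := by
  induction u using TensorProduct.induction_on with
  | zero => simp
  | tmul x y => simp
  | add u v hu hv => simp only [add_tmul, map_add, hu, hv]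

theorem L8 (v : C ⊗[k] C) (a' : A) :
    (TensorProduct.assoc k C C (C ⊗[k] A))
        ((LinearMap.rTensor (C ⊗[k] A) ΔC) (LinearMap.lTensor C (g0 k C A a') v)) =
      LinearMap.lTensor C (LinearMap.lTensor C (g0 k C A a'))
        ((TensorProduct.assoc k C C C) ((LinearMap.rTensor C ΔC) v)) := by
  induction v using TensorProduct.induction_on with
  | zero => simp
  | tmul c₁ c₂ => simp only [lTensor_tmul, g0_apply, rTensor_tmul]; exact sub8 k C A (ΔC c₁) c₂ a'
  | add u v hu hv => simp only [map_add, hu, hv]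

theorem R8 (v : C ⊗[k] C) (a' : A) :
    LinearMap.lTensor C (DD k C ΔC A) (LinearMap.lTensor C (g0 k C A a') v) =
      LinearMap.lTensor C (LinearMap.lTensor C (g0 k C A a'))
        (LinearMap.lTensor C ΔC v) := by
  induction v using TensorProduct.induction_on with
  | zero => simp
  | tmul c₁ c₂ => simp only [lTensor_tmul, g0_apply, D_tmul]
  | add u v hu hv => simp only [map_add, hu, hv]

/-- the counit `E = ε_C ⊗ A`. -/
def EE : C ⊗[k] A →ₗ[k] A :=
  LinearMap.mul' k A ∘ₗ TensorProduct.map (sA.toLinearMap ∘ₗ εC) LinearMap.id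

@[simp] lemma EE_tmul (c : C) (a : A) : EE k R C εC A sA (c ⊗ₜ[k] a) = sA (εC c) * a := by
  simp [EE]

@[simp] lemma clA_tmul (h : H) (a : A) :
    BGD.clA k R H εH A sA (h ⊗ₜ[k] a) = sA (εH h) * a := by
  simp [BGD.clA]

theorem clA_relA (b6 : ∀ (r : R) (h : H), εH (tH (op r) * h) = εH h * r)
    {y : H ⊗[k] A} (hy : y ∈ BGD.relA k R H tH A sA) :
    BGD.clA k R H εH A sA y = 0 := by
  induction hy using Submodule.span_induction with
  | zero => simp
  | add x y hx hy ihx ihy => rw [map_add, ihx, ihy, add_zero]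
  | smul a x hx ih => rw [map_smul, ih, smul_zero]
  | mem s hs =>
    obtain ⟨r, h, a, rfl⟩ := hs
    rw [map_sub, clA_tmul, clA_tmul, b6, map_mul, mul_assoc, sub_self]

theorem clA_lT (y : H ⊗[k] A) (r : R) :
    BGD.clA k R H εH A sA (LinearMap.lTensor H (LinearMap.mulRight k (sA r)) y) =
      BGD.clA k R H εH A sA y * sA r := by
  induction y using TensorProduct.induction_on with
  | zero => simp
  | tmul h a => simp [mul_assoc]
  | add u v hu hv => simp only [map_add, hu, hv, add_mul]

theorem eps_sH_tH (b5 : ∀ (r : R) (h : H), εH (sH r * h) = r * εH h) (b12 : εH 1 = 1)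
    (b14 : ∀ g h : H, εH (g * h) = εH (g * tH (op (εH h)))) (h : H) (r : R) :
    εH (h * sH r) = εH (h * tH (op r)) := by
  rw [b14 h (sH r), eps_sH k R H sH εH b5 b12]

theorem Einn (b5 : ∀ (r : R) (h : H), εH (sH r * h) = r * εH h) (b12 : εH 1 = 1)
    (b14 : ∀ g h : H, εH (g * h) = εH (g * tH (op (εH h))))
    (c7 : ∀ (h : H) (c : C), εC (act h c) = εH (h * sH (εC c)))
    (y : H ⊗[k] A) (c : C) (a' : A) :
    EE k R C εC A sA (inn k H C act A (y ⊗ₜ[k] (c ⊗ₜ[k] a'))) =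
      BGD.clA k R H εH A sA
        (LinearMap.rTensor A (LinearMap.mulRight k (tH (op (εC c)))) y) * a' := by
  induction y using TensorProduct.induction_on with
  | zero => simp
  | tmul h a₀ =>
      rw [inn_tmul, EE_tmul, rTensor_tmul, mulRight_apply, clA_tmul, c7,
        eps_sH_tH k R H sH tH εH b5 b12 b14, mul_assoc]
  | add u v hu hv =>
      rw [add_tmul, map_add, map_add, map_add, map_add, hu, hv, add_mul]

theorem epsC_tH (b5 : ∀ (r : R) (h : H), εH (sH r * h) = r * εH h) (b12 : εH 1 = 1)
    (b6 : ∀ (r : R) (h : H), εH (tH (op r) * h) = εH h * r)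
    (c7 : ∀ (h : H) (c : C), εC (act h c) = εH (h * sH (εC c)))
    (r : R) (c : C) : εC (act (tH (op r)) c) = εC c * r := by
  rw [c7, b6, eps_sH k R H sH εH b5 b12]

theorem E_lT (x : C ⊗[k] A) (a' : A) :
    EE k R C εC A sA (LinearMap.lTensor C (LinearMap.mulRight k a') x) =
      EE k R C εC A sA x * a' := by
  induction x using TensorProduct.induction_on with
  | zero => simp
  | tmul c a => simp [mul_assoc]
  | add u v hu hv => simp only [map_add, hu, hv, add_mul]

theorem inn_lT (y : H ⊗[k] A) (x : C ⊗[k] A) (a' : A) :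
    inn k H C act A (y ⊗ₜ[k] (LinearMap.lTensor C (LinearMap.mulRight k a') x)) =
      LinearMap.lTensor C (LinearMap.mulRight k a') (inn k H C act A (y ⊗ₜ[k] x)) := by
  induction y using TensorProduct.induction_on with
  | zero => simp
  | add u v hu hv => simp only [add_tmul, map_add, hu, hv]
  | tmul h a =>
    induction x using TensorProduct.induction_on with
    | zero => simp
    | tmul c a'' => simp [mul_assoc]
    | add u v hu hv => simp only [tmul_add, map_add, hu, hv]

theorem sub_lT (u : C ⊗[k] C) (a'' a' : A) :
    LinearMap.lTensor C (g0 k C A (a'' * a')) u =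
      LinearMap.lTensor C (LinearMap.lTensor C (LinearMap.mulRight k a'))
        (LinearMap.lTensor C (g0 k C A a'') u) := by
  induction u using TensorProduct.induction_on with
  | zero => simp
  | tmul c₁ c₂ => simp
  | add u v hu hv => simp only [map_add, hu, hv]

theorem D_lT (x : C ⊗[k] A) (a' : A) :
    DD k C ΔC A (LinearMap.lTensor C (LinearMap.mulRight k a') x) =
      LinearMap.lTensor C (LinearMap.lTensor C (LinearMap.mulRight k a'))
        (DD k C ΔC A x) := by
  induction x using TensorProduct.induction_on with
  | zero => simp
  | tmul c a'' =>
      rw [lTensor_tmul, mulRight_apply, D_tmul, D_tmul]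
      exact sub_lT k C A (ΔC c) a'' a'
  | add u v hu hv => simp only [map_add, hu, hv]

@[simp] lemma crC_tmul (c₁ c₂ : C) :
    BGD.crC k R H tH C act εC (c₁ ⊗ₜ[k] c₂) = act (tH (op (εC c₂))) c₁ := by
  simp [BGD.crC, BGD.evC]

theorem e2_mem (u : C ⊗[k] C) (a' : A) :
    (BGD.crC k R H tH C act εC u) ⊗ₜ[k] a' -
      LinearMap.lTensor C (EE k R C εC A sA) (LinearMap.lTensor C (g0 k C A a') u) ∈
        relCA k R H tH C act A sA := by
  induction u using TensorProduct.induction_on with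
  | zero => simp
  | tmul c₁ c₂ =>
      simp only [crC_tmul, lTensor_tmul, g0_apply, EE_tmul]
      exact Submodule.subset_span ⟨εC c₂, c₁, a', rfl⟩
  | add u v hu hv =>
      simpa only [map_add, add_tmul, ← sub_add_sub_comm] using Submodule.add_mem _ hu hv

@[simp] lemma clC_tmul (c₁ c₂ : C) :
    BGD.clC k R H sH C act εC (c₁ ⊗ₜ[k] c₂) = act (sH (εC c₁)) c₂ := by
  simp [BGD.clC, BGD.evC]

theorem e1_lemma (u : C ⊗[k] C) (a' : A) :
    LinearMap.rTensor A (TensorProduct.lift (act ∘ₗ sH.toLinearMap ∘ₗ εC))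
        ((TensorProduct.assoc k C C A).symm (LinearMap.lTensor C (g0 k C A a') u)) =
      (BGD.clC k R H sH C act εC u) ⊗ₜ[k] a' := by
  induction u using TensorProduct.induction_on with
  | zero => simp
  | tmul c₁ c₂ => simp
  | add u v hu hv => rw [map_add, map_add, map_add, hu, hv, map_add, add_tmul]

variable (hbgd : BGD.IsBialgebroid k R H sH tH ΔH εH)
  (hC : BGD.IsModuleCoalgebra k R H sH tH ΔH εH C act ΔC εC)
  (hA : BGD.IsComoduleAlgebra k R H sH tH ΔH εH A sA ρ)

abbrev HBGD := BGD.IsBialgebroid k R H sH tH ΔH εH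
abbrev HMC := BGD.IsModuleCoalgebra k R H sH tH ΔH εH C act ΔC εC
abbrev HCA := BGD.IsComoduleAlgebra k R H sH tH ΔH εH A sA ρ

theorem G1 (hC : HMC k R H sH tH ΔH εH C act ΔC εC) (hA : HCA k R H sH tH ΔH εH A sA ρ) (a : A) (r : R) (c : C) (a' : A) :
    (relCA k R H tH C act A sA).mkQ
        (inn k H C act A (ρ a ⊗ₜ[k] ((act (tH (op r)) c) ⊗ₜ[k] a'))) =
      (relCA k R H tH C act A sA).mkQ
        (inn k H C act A (ρ a ⊗ₜ[k] (c ⊗ₜ[k] (sA r * a')))) := by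
  obtain ⟨c1, c2, -⟩ := hC
  obtain ⟨-, -, -, a4, -⟩ := hA
  rw [inn_rtensor k R H tH C act A c1 (ρ a) r c a',
    inn_ltensor k R H C act A sA (ρ a) r c a']
  refine mkq_eq _ ?_
  rw [← map_sub, ← sub_tmul]
  exact inn_relA k R H tH C act A sA c1 _ (mkq_eq' (a4 r a))

theorem G2 (hC : HMC k R H sH tH ΔH εH C act ΔC εC) (hA : HCA k R H sH tH ΔH εH A sA ρ) (a b : A) (x : C ⊗[k] A) :
    (relCA k R H tH C act A sA).mkQ (inn k H C act A (ρ (a * b) ⊗ₜ[k] x)) =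
      (relCA k R H tH C act A sA).mkQ
        (inn k H C act A (ρ a ⊗ₜ[k] inn k H C act A (ρ b ⊗ₜ[k] x))) := by
  obtain ⟨c1, -⟩ := hC
  obtain ⟨-, -, -, -, a5, -⟩ := hA
  rw [← inn_mul k H C act A c1 (ρ a) (ρ b) x]
  refine mkq_eq _ ?_
  rw [← map_sub, ← sub_tmul]
  exact inn_relA k R H tH C act A sA c1 _ (mkq_eq' (a5 a b))

theorem G3 (hC : HMC k R H sH tH ΔH εH C act ΔC εC) (hA : HCA k R H sH tH ΔH εH A sA ρ) (x : C ⊗[k] A) :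
    (relCA k R H tH C act A sA).mkQ (inn k H C act A (ρ 1 ⊗ₜ[k] x)) =
      (relCA k R H tH C act A sA).mkQ x := by
  obtain ⟨c1, c2, -⟩ := hC
  obtain ⟨-, -, -, -, -, a6⟩ := hA
  have e : (relCA k R H tH C act A sA).mkQ (inn k H C act A (ρ 1 ⊗ₜ[k] x)) =
      (relCA k R H tH C act A sA).mkQ
        (inn k H C act A (((1 : H) ⊗ₜ[k] (1 : A)) ⊗ₜ[k] x)) := by
    refine mkq_eq _ ?_
    rw [← map_sub, ← sub_tmul]
    exact inn_relA k R H tH C act A sA c1 _ (mkq_eq' a6)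
  rw [e, inn_one k H C act A c2 x]

theorem G5 (hbgd : HBGD k R H sH tH ΔH εH) (hC : HMC k R H sH tH ΔH εH C act ΔC εC) (r : R) (c : C) (a' : A) :
    (rel3CA k R H sH tH C act A sA).mkQ (DD k C ΔC A ((act (tH (op r)) c) ⊗ₜ[k] a')) =
      (rel3CA k R H sH tH C act A sA).mkQ (DD k C ΔC A (c ⊗ₜ[k] (sA r * a'))) := by
  obtain ⟨b1, -, -, -, -, -, -, b8, -, -, b11, -⟩ := hbgd
  obtain ⟨c1, c2, -, -, -, c6, -⟩ := hC
  rw [D_tmul, D_tmul]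
  refine mkq_eq _ ?_
  have m1 : LinearMap.lTensor C (g0 k C A a') (ΔC (act (tH (op r)) c)) -
      LinearMap.lTensor C (g0 k C A a')
        (LinearMap.lTensor C (act (tH (op r))) (ΔC c)) ∈
      rel3CA k R H sH tH C act A sA := by
    rw [← map_sub]
    exact graft1 k R H sH tH C act A sA a'
      (DeltaC_tH k R H sH tH ΔH C act ΔC c1 c2 b1 b8 b11 c6 r c)
  have m2 := graft2 k R H sH tH C act A sA r a' (ΔC c)
  simpa only [sub_add_sub_cancel] using Submodule.add_mem _ m1 m2

theorem G6 (hC : HMC k R H sH tH ΔH εH C act ΔC εC) (a : A) (x : C ⊗[k] A) :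
    (rel3CA k R H sH tH C act A sA).mkQ (DD k C ΔC A (inn k H C act A (ρ a ⊗ₜ[k] x))) =
      (rel3CA k R H sH tH C act A sA).mkQ (F3 k H C act A
        ((TensorProduct.assoc k H H A (LinearMap.rTensor A ΔH (ρ a))) ⊗ₜ[k]
          (DD k C ΔC A x))) := by
  obtain ⟨c1, -, -, -, -, c6, -⟩ := hC
  exact step2 k R H sH tH ΔH C act ΔC A sA c1 c6 (ρ a) x

theorem G8 (hC : HMC k R H sH tH ΔH εH C act ΔC εC) (x : C ⊗[k] A) :
    (rel4CA k R H sH tH C act A sA).mkQ ((TensorProduct.assoc k C C (C ⊗[k] A))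
        ((LinearMap.rTensor (C ⊗[k] A) ΔC) (DD k C ΔC A x))) =
      (rel4CA k R H sH tH C act A sA).mkQ
        ((LinearMap.lTensor C (DD k C ΔC A)) (DD k C ΔC A x)) := by
  obtain ⟨-, -, c3, -⟩ := hC
  induction x using TensorProduct.induction_on with
  | zero => simp
  | add u v hu hv => simp only [map_add]; rw [hu, hv]
  | tmul c a' =>
      rw [D_tmul, L8, R8]
      refine mkq_eq _ ?_
      have hn := N1 k R H sH tH C act A sA a' (mkq_eq' (c3 c))
      rwa [map_sub] at hn

theorem G9 (hbgd : HBGD k R H sH tH ΔH εH) (hC : HMC k R H sH tH ΔH εH C act ΔC εC) (r : R) (c : C) (a' : A) :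
    EE k R C εC A sA ((act (tH (op r)) c) ⊗ₜ[k] a') =
      EE k R C εC A sA (c ⊗ₜ[k] (sA r * a')) := by
  obtain ⟨-, -, -, -, b5, b6, -, -, -, -, -, b12, -⟩ := hbgd
  obtain ⟨-, -, -, -, -, -, c7⟩ := hC
  rw [EE_tmul, EE_tmul, epsC_tH k R H sH tH εH C act εC b5 b12 b6 c7, map_mul, mul_assoc]

theorem G10 (hbgd : HBGD k R H sH tH ΔH εH) (hC : HMC k R H sH tH ΔH εH C act ΔC εC) (hA : HCA k R H sH tH ΔH εH A sA ρ) (a : A) (x : C ⊗[k] A) :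
    EE k R C εC A sA (inn k H C act A (ρ a ⊗ₜ[k] x)) = a * EE k R C εC A sA x := by
  obtain ⟨-, -, -, -, b5, b6, -, -, -, -, -, b12, -, b14⟩ := hbgd
  obtain ⟨-, -, -, -, -, -, c7⟩ := hC
  obtain ⟨-, a2, -, a4, -⟩ := hA
  induction x using TensorProduct.induction_on with
  | zero => simp
  | add u v hu hv => simp only [tmul_add, map_add, mul_add, hu, hv]
  | tmul c a' =>
      rw [Einn k R H sH tH εH C act εC A sA b5 b12 b14 c7 (ρ a) c a', EE_tmul]
      have key : BGD.clA k R H εH A sA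
          (LinearMap.rTensor A (LinearMap.mulRight k (tH (op (εC c)))) (ρ a)) =
        BGD.clA k R H εH A sA
          (LinearMap.lTensor H (LinearMap.mulRight k (sA (εC c))) (ρ a)) := by
        have hm := mkq_eq' (a4 (εC c) a)
        have h0 := clA_relA k R H tH εH A sA b6 hm
        rw [map_sub] at h0
        exact sub_eq_zero.mp h0
      rw [key, clA_lT k R H εH A sA (ρ a) (εC c), a2 a, mul_assoc]

theorem e1D (hC : HMC k R H sH tH ΔH εH C act ΔC εC) (x : C ⊗[k] A) :
    (LinearMap.rTensor A (TensorProduct.lift (act ∘ₗ sH.toLinearMap ∘ₗ εC)))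
        ((TensorProduct.assoc k C C A).symm (DD k C ΔC A x)) = x := by
  obtain ⟨-, -, -, c4, -⟩ := hC
  induction x using TensorProduct.induction_on with
  | zero => simp
  | add u v hu hv => simp only [map_add]; rw [hu, hv]
  | tmul c a' => rw [D_tmul, e1_lemma, c4 c]

theorem G12 (hC : HMC k R H sH tH ΔH εH C act ΔC εC) (x : C ⊗[k] A) :
    (relCA k R H tH C act A sA).mkQ
        ((LinearMap.rTensor A (TensorProduct.lift (act ∘ₗ sH.toLinearMap ∘ₗ εC)))
          ((TensorProduct.assoc k C C A).symm (DD k C ΔC A x))) =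
      (relCA k R H tH C act A sA).mkQ x := by
  rw [e1D k R H sH tH ΔH εH C act ΔC εC A hC x]

theorem G13 (hC : HMC k R H sH tH ΔH εH C act ΔC εC) (x : C ⊗[k] A) :
    (relCA k R H tH C act A sA).mkQ
        (LinearMap.lTensor C (EE k R C εC A sA) (DD k C ΔC A x)) =
      (relCA k R H tH C act A sA).mkQ x := by
  obtain ⟨-, -, -, -, c5, -⟩ := hC
  induction x using TensorProduct.induction_on with
  | zero => simp
  | add u v hu hv => simp only [map_add]; rw [hu, hv]
  | tmul c a' =>
      have e := mkq_eq (relCA k R H tH C act A sA)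
        (e2_mem k R H tH C act εC A sA (ΔC c) a')
      rw [c5 c] at e
      rw [D_tmul]
      exact e.symm

end DKP
end

/-- Let `(H, A, C)_R` be a left-left Doi-Koppinen datum over `R`.  Then
`𝒞 = C ⊗_R A` is an `A`-coring: an `A`-bimodule with right action by multiplication and
left action `a · (c ⊗ a') = a₍₋₁₎·c ⊗ a₍₀₎a'`, coproduct `Δ_C ⊗_R A` and counit
`ε_C ⊗_R A` (i.e. `c ⊗ a ↦ s_A(ε_C c) a`).  All structure maps are expressed on
representatives in `C ⊗_k A`; well-definedness modulo the balancing relations is part of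
the statement, as are the `A`-bimodule, coassociativity and counit axioms. -/
theorem stmt16 (k : Type*) [CommRing k] (R H : Type*) [Ring R] [Ring H]
    [Algebra k R] [Algebra k H]
    (sH : R →ₐ[k] H) (tH : Rᵐᵒᵖ →ₐ[k] H)
    (ΔH : H →ₗ[k] H ⊗[k] H) (εH : H →ₗ[k] R)
    (C : Type*) [AddCommGroup C] [Module k C]
    (act : H →ₗ[k] C →ₗ[k] C) (ΔC : C →ₗ[k] C ⊗[k] C) (εC : C →ₗ[k] R)
    (A : Type*) [Ring A] [Algebra k A] (sA : R →ₐ[k] A) (ρ : A →ₗ[k] H ⊗[k] A)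
    (hbgd : BGD.IsBialgebroid k R H sH tH ΔH εH)
    (hC : BGD.IsModuleCoalgebra k R H sH tH ΔH εH C act ΔC εC)
    (hA : BGD.IsComoduleAlgebra k R H sH tH ΔH εH A sA ρ) :
    -- `C ⊗_R A`: balancing relations
    letI relCA : Submodule k (C ⊗[k] A) := Submodule.span k
      {x | ∃ (r : R) (c : C) (a : A),
        x = (act (tH (op r)) c) ⊗ₜ[k] a - c ⊗ₜ[k] (sA r * a)}
    -- `(h ⊗ a₀) ⊗ (c ⊗ a') ↦ h·c ⊗ a₀a'`
    letI inn : (H ⊗[k] A) ⊗[k] (C ⊗[k] A) →ₗ[k] C ⊗[k] A :=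
      TensorProduct.map (TensorProduct.lift act) (LinearMap.mul' k A) ∘ₗ
        (TensorProduct.tensorTensorTensorComm k H A C A).toLinearMap
    -- the left `A`-action `a · (c ⊗ a') = a₍₋₁₎·c ⊗ a₍₀₎a'`
    letI lam : A → (C ⊗[k] A →ₗ[k] C ⊗[k] A) := fun a =>
      inn ∘ₗ TensorProduct.mk k (H ⊗[k] A) (C ⊗[k] A) (ρ a)
    -- the coproduct `Δ_𝒞 = Δ_C ⊗ A : C ⊗ A → C ⊗ (C ⊗ A)`
    letI D : C ⊗[k] A →ₗ[k] C ⊗[k] (C ⊗[k] A) :=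
      (TensorProduct.assoc k C C A).toLinearMap ∘ₗ LinearMap.rTensor A ΔC
    -- balancing relations for `C ⊗_R C ⊗_R A`
    letI rel3 : Submodule k (C ⊗[k] (C ⊗[k] A)) := Submodule.span k
      ({x | ∃ (r : R) (c : C) (y : C ⊗[k] A),
          x = (act (tH (op r)) c) ⊗ₜ[k] y -
            c ⊗ₜ[k] ((LinearMap.rTensor A (act (sH r))) y)} ∪
       {x | ∃ (r : R) (c c' : C) (a : A),
          x = c ⊗ₜ[k] ((act (tH (op r)) c') ⊗ₜ[k] a) - c ⊗ₜ[k] (c' ⊗ₜ[k] (sA r * a))})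
    -- balancing relations for `C ⊗_R C ⊗_R C ⊗_R A`
    letI rel4 : Submodule k (C ⊗[k] (C ⊗[k] (C ⊗[k] A))) := Submodule.span k
      ({x | ∃ (r : R) (c : C) (y : C ⊗[k] (C ⊗[k] A)),
          x = (act (tH (op r)) c) ⊗ₜ[k] y -
            c ⊗ₜ[k] ((LinearMap.rTensor (C ⊗[k] A) (act (sH r))) y)} ∪
       {x | ∃ (r : R) (c c' : C) (y : C ⊗[k] A),
          x = c ⊗ₜ[k] ((act (tH (op r)) c') ⊗ₜ[k] y) -
            c ⊗ₜ[k] (c' ⊗ₜ[k] ((LinearMap.rTensor A (act (sH r))) y))} ∪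
       {x | ∃ (r : R) (c c' c'' : C) (a : A),
          x = c ⊗ₜ[k] (c' ⊗ₜ[k] ((act (tH (op r)) c'') ⊗ₜ[k] a)) -
            c ⊗ₜ[k] (c' ⊗ₜ[k] (c'' ⊗ₜ[k] (sA r * a)))})
    -- the left `A`-action on `C ⊗ (C ⊗ A)`:
    -- `a · (c ⊗ c' ⊗ a') = a₍₋₂₎·c ⊗ a₍₋₁₎·c' ⊗ a₍₀₎a'`
    letI lam3 : A → (C ⊗[k] (C ⊗[k] A) →ₗ[k] C ⊗[k] (C ⊗[k] A)) := fun a =>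
      (TensorProduct.map (TensorProduct.lift act) inn ∘ₗ
        (TensorProduct.tensorTensorTensorComm k H (H ⊗[k] A) C (C ⊗[k] A)).toLinearMap) ∘ₗ
        TensorProduct.mk k (H ⊗[k] (H ⊗[k] A)) (C ⊗[k] (C ⊗[k] A))
          ((TensorProduct.assoc k H H A) ((LinearMap.rTensor A ΔH) (ρ a)))
    -- the counit `E(c ⊗ a) = s_A(ε_C c) a`
    letI E : C ⊗[k] A →ₗ[k] A :=
      LinearMap.mul' k A ∘ₗ TensorProduct.map (sA.toLinearMap ∘ₗ εC) LinearMap.id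
    -- `(ε_𝒞 ⊗_A id)` and `(id ⊗_A ε_𝒞)` evaluated on `C ⊗ (C ⊗ A)`
    letI e1 : C ⊗[k] (C ⊗[k] A) →ₗ[k] C ⊗[k] A :=
      LinearMap.rTensor A (TensorProduct.lift (act ∘ₗ sH.toLinearMap ∘ₗ εC)) ∘ₗ
        (TensorProduct.assoc k C C A).symm.toLinearMap
    letI e2 : C ⊗[k] (C ⊗[k] A) →ₗ[k] C ⊗[k] A := LinearMap.lTensor C E
    -- the statement: `𝒞 = (C ⊗ A)⧸relCA` is an `A`-coring:
    -- (1) the left `A`-action is well defined, associative and unital: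
    (∀ (a : A) (r : R) (c : C) (a' : A),
      relCA.mkQ (lam a ((act (tH (op r)) c) ⊗ₜ[k] a')) =
        relCA.mkQ (lam a (c ⊗ₜ[k] (sA r * a')))) ∧
    (∀ (a b : A) (x : C ⊗[k] A),
      relCA.mkQ (lam (a * b) x) = relCA.mkQ (lam a (lam b x))) ∧
    (∀ x : C ⊗[k] A, relCA.mkQ (lam 1 x) = relCA.mkQ x) ∧
    -- (2) left and right actions commute:
    (∀ (a a' : A) (x : C ⊗[k] A),
      lam a ((LinearMap.lTensor C (LinearMap.mulRight k a')) x) =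
        (LinearMap.lTensor C (LinearMap.mulRight k a')) (lam a x)) ∧
    -- (3) the coproduct is well defined and an `A`-bimodule map:
    (∀ (r : R) (c : C) (a' : A),
      rel3.mkQ (D ((act (tH (op r)) c) ⊗ₜ[k] a')) =
        rel3.mkQ (D (c ⊗ₜ[k] (sA r * a')))) ∧
    (∀ (a : A) (x : C ⊗[k] A), rel3.mkQ (D (lam a x)) = rel3.mkQ (lam3 a (D x))) ∧
    (∀ (a' : A) (x : C ⊗[k] A),
      D ((LinearMap.lTensor C (LinearMap.mulRight k a')) x) =
        (LinearMap.lTensor C (LinearMap.lTensor C (LinearMap.mulRight k a'))) (D x)) ∧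
    -- (4) coassociativity:
    (∀ x : C ⊗[k] A,
      rel4.mkQ ((TensorProduct.assoc k C C (C ⊗[k] A))
          ((LinearMap.rTensor (C ⊗[k] A) ΔC) (D x))) =
        rel4.mkQ ((LinearMap.lTensor C D) (D x))) ∧
    -- (5) the counit is well defined and an `A`-bimodule map:
    (∀ (r : R) (c : C) (a' : A),
      E ((act (tH (op r)) c) ⊗ₜ[k] a') = E (c ⊗ₜ[k] (sA r * a'))) ∧
    (∀ (a : A) (x : C ⊗[k] A), E (lam a x) = a * E x) ∧
    (∀ (a' : A) (x : C ⊗[k] A),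
      E ((LinearMap.lTensor C (LinearMap.mulRight k a')) x) = E x * a') ∧
    -- (6) counit axioms:
    (∀ x : C ⊗[k] A, relCA.mkQ (e1 (D x)) = relCA.mkQ x) ∧
    (∀ x : C ⊗[k] A, relCA.mkQ (e2 (D x)) = relCA.mkQ x) := by
  refine ⟨fun a r c a' => DKP.G1 k R H sH tH ΔH εH C act ΔC εC A sA ρ hC hA a r c a',
    fun a b x => DKP.G2 k R H sH tH ΔH εH C act ΔC εC A sA ρ hC hA a b x,
    fun x => DKP.G3 k R H sH tH ΔH εH C act ΔC εC A sA ρ hC hA x,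
    fun a a' x => DKP.inn_lT k H C act A (ρ a) x a',
    fun r c a' => DKP.G5 k R H sH tH ΔH εH C act ΔC εC A sA hbgd hC r c a',
    fun a x => DKP.G6 k R H sH tH ΔH εH C act ΔC εC A sA ρ hC a x,
    fun a' x => DKP.D_lT k C ΔC A x a',
    fun x => DKP.G8 k R H sH tH ΔH εH C act ΔC εC A sA hC x,
    fun r c a' => DKP.G9 k R H sH tH ΔH εH C act ΔC εC A sA hbgd hC r c a',
    fun a x => DKP.G10 k R H sH tH ΔH εH C act ΔC εC A sA ρ hbgd hC hA a x,
    fun a' x => DKP.E_lT k R C εC A sA x a',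
    fun x => DKP.G12 k R H sH tH ΔH εH C act ΔC εC A sA hC x,
    fun x => DKP.G13 k R H sH tH ΔH εH C act ΔC εC A sA hC x⟩
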